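/- arXiv:2212.12885 — 3 statements merged into one kernel-verified Lean document; each statement's English description precedes it below -/
import Mathlib

section
/- Let $f:\mathbb{R}_+\to\mathbb{R}$ be continuous and strictly increasing on some interval $(K_0,\infty)$, and suppose $\lim_{x\to\infty} f(x)/(x^a(\log x)^b) = c \in (0,\infty)$ for some $a>0$, $b\ge 0$. Then $f^{-1}(y)$ is well defined for all large $y$, and $\lim_{y\to\infty} f^{-1}(y) \Big/ \left(\frac{a^b y}{c(\log y)^b}\right)^{1/a} = 1$. -/
open Filter Real

theorem stmt_3 (f : ℝ → ℝ) (K₀ a b c : ℝ) (ha : 0 < a) (hb : 0 ≤ b) (hc : 0 < c)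
    (hcont : ContinuousOn f (Set.Ioi K₀))
    (hmono : StrictMonoOn f (Set.Ioi K₀))
    (hlim : Tendsto (fun x => f x / (x ^ a * (Real.log x) ^ b)) atTop (nhds c)) :
    ∃ finv : ℝ → ℝ,
      (∀ᶠ y in atTop, finv y ∈ Set.Ioi K₀ ∧ f (finv y) = y) ∧
      Tendsto (fun y => finv y / (a ^ b * y / (c * (Real.log y) ^ b)) ^ (1 / a))
        atTop (nhds 1) := by
  classical
  set g : ℝ → ℝ := fun x => x ^ a * (Real.log x) ^ b with hgdef
  -- g tends to atTop
  have hg_top : Tendsto g atTop atTop := by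
    apply tendsto_atTop_mono' atTop _ (tendsto_rpow_atTop ha)
    filter_upwards [Real.tendsto_log_atTop.eventually_ge_atTop 1,
      eventually_ge_atTop (0 : ℝ)] with x h1 h0
    have h2 : (1 : ℝ) ≤ (Real.log x) ^ b := Real.one_le_rpow h1 hb
    have h3 : (0 : ℝ) ≤ x ^ a := Real.rpow_nonneg h0 a
    calc x ^ a = x ^ a * 1 := by ring
    _ ≤ g x := by simpa [hgdef] using mul_le_mul_of_nonneg_left h2 h3
  -- f tends to atTop
  have hf_top : Tendsto f atTop atTop := by
    refine (Tendsto.pos_mul_atTop hc hlim hg_top).congr' ?_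
    filter_upwards [hg_top.eventually_gt_atTop 0] with x hx
    exact div_mul_cancel₀ _ hx.ne'
  -- existence of preimages
  have hex : ∀ y, f (K₀ + 1) ≤ y → ∃ x ∈ Set.Ioi K₀, f x = y := by
    intro y hy
    obtain ⟨X, hX1, hX2⟩ := ((hf_top.eventually_ge_atTop y).and
      (eventually_ge_atTop (K₀ + 1))).exists
    have hsub : Set.Icc (K₀ + 1) X ⊆ Set.Ioi K₀ := fun x hx => lt_of_lt_of_le
      (by linarith) hx.1
    have := intermediate_value_Icc hX2 (hcont.mono hsub) ⟨hy, hX1⟩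
    obtain ⟨x, hx, hfx⟩ := this
    exact ⟨x, hsub hx, hfx⟩
  set finv : ℝ → ℝ := fun y => if h : ∃ x ∈ Set.Ioi K₀, f x = y then h.choose else 0
    with hfinvdef
  have hfinv_spec : ∀ y, f (K₀ + 1) ≤ y → finv y ∈ Set.Ioi K₀ ∧ f (finv y) = y := by
    intro y hy
    have h := hex y hy
    simp only [hfinvdef, dif_pos h]
    exact ⟨h.choose_spec.1, h.choose_spec.2⟩
  have hev : ∀ᶠ y in atTop, finv y ∈ Set.Ioi K₀ ∧ f (finv y) = y :=
    (eventually_ge_atTop (f (K₀ + 1))).mono fun y hy => hfinv_spec y hy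
  -- finv tends to atTop
  have hfinv_top : Tendsto finv atTop atTop := by
    rw [tendsto_atTop]
    intro M
    set M' := max M (K₀ + 1) with hM'
    have hM'K : M' ∈ Set.Ioi K₀ := lt_of_lt_of_le (by linarith : K₀ < K₀ + 1) (le_max_right _ _)
    filter_upwards [hev, eventually_gt_atTop (f M')] with y hy hfy
    by_contra h
    push_neg at h
    have hle : finv y ≤ M' := le_trans h.le (le_max_left _ _)
    have := hmono.monotoneOn hy.1 hM'K hle
    rw [hy.2] at this
    exact absurd (lt_of_lt_of_le hfy this) (lt_irrefl _)
  -- u = log ∘ finv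
  set u : ℝ → ℝ := fun y => Real.log (finv y) with hudef
  have hu_top : Tendsto u atTop atTop := Real.tendsto_log_atTop.comp hfinv_top
  -- step B
  have hB : Tendsto (fun y => y / g (finv y)) atTop (nhds c) := by
    refine (hlim.comp hfinv_top).congr' ?_
    filter_upwards [hev] with y hy
    simp only [Function.comp_apply, hy.2, hgdef]
  -- step C
  set v : ℝ → ℝ := fun y => Real.log y - (a * u y + b * Real.log (u y)) with hvdef
  have hv : Tendsto v atTop (nhds (Real.log c)) := by
    have h1 : Tendsto (fun y => Real.log (y / g (finv y))) atTop (nhds (Real.log c)) :=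
      (Real.continuousAt_log hc.ne').tendsto.comp hB
    refine h1.congr' ?_
    filter_upwards [hfinv_top.eventually_gt_atTop 1, hu_top.eventually_gt_atTop 0,
      eventually_gt_atTop (0 : ℝ)] with y hx hu hy
    have hx0 : (0 : ℝ) < finv y := lt_trans one_pos hx
    have hxa : (0 : ℝ) < finv y ^ a := Real.rpow_pos_of_pos hx0 a
    have hlb : (0 : ℝ) < (Real.log (finv y)) ^ b := Real.rpow_pos_of_pos hu b
    simp only [hgdef, hvdef, hudef]
    rw [Real.log_div hy.ne' (by positivity), Real.log_mul hxa.ne' hlb.ne',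
      Real.log_rpow hx0, Real.log_rpow hu]
  -- log u / u → 0
  have hD1 : Tendsto (fun y => Real.log (u y) / u y) atTop (nhds 0) :=
    (Real.isLittleO_log_id_atTop.tendsto_div_nhds_zero).comp hu_top
  -- log y / u y → a
  have hD2 : Tendsto (fun y => Real.log y / u y) atTop (nhds a) := by
    have h1 : Tendsto (fun y => (Real.log y - v y) / u y) atTop (nhds a) := by
      have h2 : Tendsto (fun y => a + b * (Real.log (u y) / u y)) atTop (nhds (a + b * 0)) :=
        tendsto_const_nhds.add (hD1.const_mul b)
      rw [mul_zero, add_zero] at h2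
      refine h2.congr' ?_
      filter_upwards [hu_top.eventually_gt_atTop 0] with y hu
      simp only [hvdef]
      field_simp
      ring
    have h3 : Tendsto (fun y => v y / u y) atTop (nhds 0) := hv.div_atTop hu_top
    have := h1.add h3
    rw [add_zero] at this
    refine this.congr fun y => ?_
    rw [← add_div, sub_add_cancel]
  -- u / log y → a⁻¹
  have hD3 : Tendsto (fun y => u y / Real.log y) atTop (nhds a⁻¹) := by
    have := hD2.inv₀ ha.ne'
    refine this.congr fun y => ?_
    rw [← one_div, one_div_div]
  -- step E : log u - log log y → - log a
  have hE : Tendsto (fun y => Real.log (u y) - Real.log (Real.log y)) atTop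
      (nhds (-Real.log a)) := by
    have h1 : Tendsto (fun y => Real.log (u y / Real.log y)) atTop (nhds (Real.log a⁻¹)) :=
      (Real.continuousAt_log (by positivity)).tendsto.comp hD3
    rw [Real.log_inv] at h1
    refine h1.congr' ?_
    filter_upwards [hu_top.eventually_gt_atTop 0,
      Real.tendsto_log_atTop.eventually_gt_atTop 0] with y h1 h2
    rw [Real.log_div h1.ne' h2.ne']
  -- the target denominator
  set T : ℝ → ℝ := fun y => (a ^ b * y / (c * (Real.log y) ^ b)) ^ (1 / a) with hTdef
  have hbase : ∀ᶠ y in atTop, (0 : ℝ) < a ^ b * y / (c * (Real.log y) ^ b) := by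
    filter_upwards [eventually_gt_atTop (0 : ℝ),
      Real.tendsto_log_atTop.eventually_gt_atTop 0] with y hy hly
    have : (0 : ℝ) < a ^ b := Real.rpow_pos_of_pos ha b
    positivity
  have hlogT : ∀ᶠ y in atTop, Real.log (T y) =
      (1 / a) * (b * Real.log a + Real.log y - Real.log c - b * Real.log (Real.log y)) := by
    filter_upwards [hbase, eventually_gt_atTop (0 : ℝ),
      Real.tendsto_log_atTop.eventually_gt_atTop 0] with y h0 hy hly
    have hab : (0 : ℝ) < a ^ b := Real.rpow_pos_of_pos ha b
    have hlb : (0 : ℝ) < (Real.log y) ^ b := Real.rpow_pos_of_pos hly b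
    simp only [hTdef]
    rw [Real.log_rpow h0, Real.log_div (by positivity) (by positivity),
      Real.log_mul hab.ne' hy.ne', Real.log_mul hc.ne' hlb.ne',
      Real.log_rpow ha, Real.log_rpow hly]
    ring
  -- u - log T → 0
  have hdiff : Tendsto (fun y => u y - Real.log (T y)) atTop (nhds 0) := by
    have h1 : Tendsto (fun y => (1 / a) * (Real.log c - v y -
        b * (Real.log (u y) - Real.log (Real.log y)) - b * Real.log a)) atTop
        (nhds ((1 / a) * (Real.log c - Real.log c - b * (-Real.log a) - b * Real.log a))) := by
      exact (((tendsto_const_nhds.sub hv).sub (hE.const_mul b)).sub tendsto_const_nhds).const_mul _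
    have h0 : (1 / a) * (Real.log c - Real.log c - b * (-Real.log a) - b * Real.log a) = 0 := by
      ring
    rw [h0] at h1
    refine h1.congr' ?_
    filter_upwards [hlogT] with y hy
    rw [hy]
    simp only [hvdef]
    field_simp
    ring
  -- conclude
  refine ⟨finv, hev, ?_⟩
  have hfinal : Tendsto (fun y => Real.exp (u y - Real.log (T y))) atTop (nhds 1) := by
    have := Real.continuous_exp.continuousAt.tendsto.comp hdiff
    simpa [Function.comp_def] using this
  refine hfinal.congr' ?_
  filter_upwards [hfinv_top.eventually_gt_atTop 0, hbase] with y h1 h2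
  have hT : (0 : ℝ) < T y := Real.rpow_pos_of_pos h2 _
  rw [Real.exp_sub, Real.exp_log h1, Real.exp_log hT]
end

section
/- For fixed $x>0$ and $a\in\mathbb{R}$, let $\Gamma(t,x)=\int_x^\infty e^{-r} r^{t-1} dr$ denote the upper incomplete gamma function and $\Gamma(t)=\Gamma(t,0)$. Then $\lim_{t\to\infty} \left(\frac{\Gamma(t+a,x)}{\Gamma(t)} - t^a\right) \cdot t^{-a} = 0$, i.e. $\Gamma(t+a,x)/\Gamma(t) = t^a(1+o(1))$ as $t\to\infty$. -/
open MeasureTheory Filter Real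

/-- The upper incomplete gamma function `Γ(t,x) = ∫_x^∞ e^{-r} r^{t-1} dr`. -/
noncomputable def upperIncGamma (t x : ℝ) : ℝ :=
  ∫ r in Set.Ioi x, Real.exp (-r) * r ^ (t - 1)

open Set Topology

lemma wendel_upper {t b : ℝ} (ht : 0 < t) (hb0 : 0 < b) (hb1 : b < 1) :
    Real.Gamma (t + b) ≤ Real.Gamma t * t ^ b := by
  have hG := Real.Gamma_pos_of_pos ht
  have h := Real.Gamma_mul_add_mul_le_rpow_Gamma_mul_rpow_Gamma (s := t) (t := t + 1)
    (a := 1 - b) (b := b) ht (by linarith) (by linarith) hb0 (by ring)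
  have he : (1 - b) * t + b * (t + 1) = t + b := by ring
  rw [he, Real.Gamma_add_one ht.ne'] at h
  calc Real.Gamma (t + b) ≤ Real.Gamma t ^ (1 - b) * (t * Real.Gamma t) ^ b := h
    _ = Real.Gamma t ^ ((1 - b) + b) * t ^ b := by
        rw [Real.mul_rpow ht.le hG.le, Real.rpow_add hG]; ring
    _ = Real.Gamma t * t ^ b := by norm_num

lemma wendel_lower {t b : ℝ} (ht : 0 < t) (hb0 : 0 < b) (hb1 : b < 1) :
    t * Real.Gamma t ≤ Real.Gamma (t + b) * (t + b) ^ (1 - b) := by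
  have hG := Real.Gamma_pos_of_pos (by linarith : (0:ℝ) < t + b)
  have h := Real.Gamma_mul_add_mul_le_rpow_Gamma_mul_rpow_Gamma (s := t + b) (t := t + b + 1)
    (a := b) (b := 1 - b) (by linarith) (by linarith) hb0 (by linarith) (by ring)
  have he : b * (t + b) + (1 - b) * (t + b + 1) = t + 1 := by ring
  rw [he, Real.Gamma_add_one ht.ne', Real.Gamma_add_one (by positivity : t + b ≠ 0)] at h
  calc t * Real.Gamma t ≤ Real.Gamma (t+b) ^ b * ((t+b) * Real.Gamma (t+b)) ^ (1-b) := h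
    _ = Real.Gamma (t+b) ^ (b + (1-b)) * (t+b) ^ (1-b) := by
        rw [Real.mul_rpow (by linarith) hG.le, Real.rpow_add hG]; ring
    _ = Real.Gamma (t+b) * (t+b) ^ (1-b) := by norm_num

noncomputable def gammaRatio (a t : ℝ) : ℝ := Real.Gamma (t + a) / (Real.Gamma t * t ^ a)

lemma tendsto_add_div_self (c : ℝ) : Tendsto (fun t : ℝ => (t + c) / t) atTop (𝓝 1) := by
  have h : Tendsto (fun t : ℝ => 1 + c / t) atTop (𝓝 (1 + 0)) :=
    tendsto_const_nhds.add (tendsto_const_nhds.div_atTop tendsto_id)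
  rw [add_zero] at h
  refine h.congr' ?_
  filter_upwards [eventually_gt_atTop 0] with t ht
  field_simp

lemma tendsto_div_add_self (c : ℝ) : Tendsto (fun t : ℝ => t / (t + c)) atTop (𝓝 1) := by
  have h := (tendsto_add_div_self c).inv₀ one_ne_zero
  rw [inv_one] at h
  refine h.congr' ?_
  filter_upwards [eventually_gt_atTop (max 0 (-c))] with t ht
  have h1 : 0 < t := lt_of_le_of_lt (le_max_left _ _) ht
  have h2 : 0 < t + c := by have := lt_of_le_of_lt (le_max_right _ _) ht; linarith
  rw [← one_div]
  field_simp

lemma gammaRatio_base {b : ℝ} (hb0 : 0 ≤ b) (hb1 : b < 1) :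
    Tendsto (gammaRatio b) atTop (𝓝 1) := by
  rcases eq_or_lt_of_le hb0 with rfl | hb0
  · refine tendsto_const_nhds.congr' ?_
    filter_upwards [eventually_gt_atTop 0] with t ht
    have := (Real.Gamma_pos_of_pos ht).ne'
    simp [gammaRatio, Real.rpow_zero, div_self, this]
  · -- squeeze between (t/(t+b))^(1-b) and 1
    have hlow : Tendsto (fun t : ℝ => (t / (t + b)) ^ (1 - b)) atTop (𝓝 1) := by
      have := (tendsto_div_add_self b).rpow_const (p := 1 - b) (Or.inr (by linarith))
      rwa [Real.one_rpow] at this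
    refine tendsto_of_tendsto_of_tendsto_of_le_of_le' hlow tendsto_const_nhds ?_ ?_
    · filter_upwards [eventually_gt_atTop 0] with t ht
      have hG := Real.Gamma_pos_of_pos ht
      have htb : (0:ℝ) < t + b := by linarith
      have h := wendel_lower ht hb0 hb1
      have hpos : 0 < Real.Gamma t * t ^ b := by positivity
      rw [Real.div_rpow ht.le htb.le, gammaRatio, le_div_iff₀ hpos]
      have ht1b : t ^ (1 - b) * t ^ b = t := by
        rw [← Real.rpow_add ht]; norm_num
      rw [div_mul_eq_mul_div, div_le_iff₀ (by positivity : (0:ℝ) < (t + b) ^ (1 - b))]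
      calc t ^ (1 - b) * (Real.Gamma t * t ^ b)
          = (t ^ (1-b) * t ^ b) * Real.Gamma t := by ring
        _ = t * Real.Gamma t := by rw [ht1b]
        _ ≤ Real.Gamma (t + b) * (t + b) ^ (1 - b) := h
    · filter_upwards [eventually_gt_atTop 0] with t ht
      have hG := Real.Gamma_pos_of_pos ht
      have hpos : 0 < Real.Gamma t * t ^ b := by positivity
      rw [gammaRatio, div_le_one hpos]
      exact wendel_upper ht hb0 hb1
lemma gammaRatio_succ {a : ℝ} (h : Tendsto (gammaRatio a) atTop (𝓝 1)) :
    Tendsto (gammaRatio (a + 1)) atTop (𝓝 1) := by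
  have := h.mul (tendsto_add_div_self a)
  rw [mul_one] at this
  refine this.congr' ?_
  filter_upwards [eventually_gt_atTop (max 0 (-a))] with t ht
  have h1 : 0 < t := lt_of_le_of_lt (le_max_left _ _) ht
  have h2 : 0 < t + a := by have := lt_of_le_of_lt (le_max_right _ _) ht; linarith
  have hG := (Real.Gamma_pos_of_pos h1).ne'
  have hr : t ^ (a + 1) = t ^ a * t := by rw [Real.rpow_add h1, Real.rpow_one]
  simp only [gammaRatio]
  rw [show t + (a + 1) = (t + a) + 1 by ring, Real.Gamma_add_one h2.ne', hr]
  have hta : t ^ a ≠ 0 := (Real.rpow_pos_of_pos h1 a).ne'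
  field_simp

lemma gammaRatio_pred {a : ℝ} (h : Tendsto (gammaRatio (a + 1)) atTop (𝓝 1)) :
    Tendsto (gammaRatio a) atTop (𝓝 1) := by
  have := h.mul (tendsto_div_add_self a)
  rw [mul_one] at this
  refine this.congr' ?_
  filter_upwards [eventually_gt_atTop (max 0 (-a))] with t ht
  have h1 : 0 < t := lt_of_le_of_lt (le_max_left _ _) ht
  have h2 : 0 < t + a := by have := lt_of_le_of_lt (le_max_right _ _) ht; linarith
  have hG := (Real.Gamma_pos_of_pos h1).ne'
  have hr : t ^ (a + 1) = t ^ a * t := by rw [Real.rpow_add h1, Real.rpow_one]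
  simp only [gammaRatio]
  rw [show t + (a + 1) = (t + a) + 1 by ring, Real.Gamma_add_one h2.ne', hr]
  have hta : t ^ a ≠ 0 := (Real.rpow_pos_of_pos h1 a).ne'
  field_simp

lemma gammaRatio_all (a : ℝ) : Tendsto (gammaRatio a) atTop (𝓝 1) := by
  have key : ∀ n : ℤ, Tendsto (gammaRatio (Int.fract a + n)) atTop (𝓝 1) := by
    intro n
    induction n using Int.induction_on with
    | zero => simpa using gammaRatio_base (Int.fract_nonneg a) (Int.fract_lt_one a)
    | succ k ih =>
        have := gammaRatio_succ ih
        rwa [show Int.fract a + (((k:ℤ) + 1 : ℤ) : ℝ) = Int.fract a + ((k:ℤ):ℝ) + 1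
          by push_cast; ring]
    | pred k ih =>
        have := gammaRatio_pred (a := Int.fract a + (-(k:ℝ) - 1)) ?_
        · rwa [show Int.fract a + (-(k:ℝ) - 1) = Int.fract a + ((-(k:ℤ) - 1 : ℤ) : ℝ)
            by push_cast; ring] at this
        · rwa [show Int.fract a + (-(k:ℝ) - 1) + 1 = Int.fract a + ((-(k:ℤ) : ℤ) : ℝ)
            by push_cast; ring]
  have := key ⌊a⌋
  rwa [Int.fract_add_floor a] at this
lemma upperIncGamma_eq {s x : ℝ} (hs : 0 < s) (hx : 0 < x) :
    upperIncGamma s x = Real.Gamma s - ∫ r in Set.Ioc 0 x, Real.exp (-r) * r ^ (s - 1) := by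
  have hi := Real.GammaIntegral_convergent hs
  have hu : Set.Ioc (0:ℝ) x ∪ Set.Ioi x = Set.Ioi 0 := Set.Ioc_union_Ioi_eq_Ioi hx.le
  have h1 : IntegrableOn (fun r : ℝ => Real.exp (-r) * r ^ (s - 1)) (Set.Ioc 0 x) :=
    hi.mono_set (by rw [← hu]; exact Set.subset_union_left)
  have h2 : IntegrableOn (fun r : ℝ => Real.exp (-r) * r ^ (s - 1)) (Set.Ioi x) :=
    hi.mono_set (by rw [← hu]; exact Set.subset_union_right)
  have := setIntegral_union (Set.Ioc_disjoint_Ioi le_rfl) measurableSet_Ioi h1 h2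
    (f := fun r : ℝ => Real.exp (-r) * r ^ (s - 1)) (μ := volume)
  rw [hu] at this
  rw [upperIncGamma, Real.Gamma_eq_integral hs, this]
  ring

lemma lowerPart_bounds {s x : ℝ} (hs : 1 ≤ s) (hx : 0 < x) :
    (∫ r in Set.Ioc 0 x, Real.exp (-r) * r ^ (s - 1)) ∈
      Set.Icc 0 (x * (max x 1) ^ (s - 1)) := by
  have hM : (0:ℝ) < max x 1 := lt_of_lt_of_le one_pos (le_max_right _ _)
  constructor
  · refine setIntegral_nonneg measurableSet_Ioc fun r hr => ?_
    have : (0:ℝ) < r := hr.1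
    positivity
  · have h1 : IntegrableOn (fun r : ℝ => Real.exp (-r) * r ^ (s - 1)) (Set.Ioc 0 x) :=
      (Real.GammaIntegral_convergent (by linarith)).mono_set Set.Ioc_subset_Ioi_self
    calc (∫ r in Set.Ioc 0 x, Real.exp (-r) * r ^ (s - 1))
        ≤ ∫ _ in Set.Ioc 0 x, (max x 1) ^ (s - 1) := by
          refine setIntegral_mono_on h1 ((integrableOn_const_iff).mpr (Or.inr ?_)) measurableSet_Ioc
            fun r hr => ?_
          · rw [Real.volume_Ioc]; exact ENNReal.ofReal_lt_top
          · calc Real.exp (-r) * r ^ (s - 1) ≤ 1 * r ^ (s - 1) := by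
                  gcongr
                  · exact Real.rpow_nonneg hr.1.le _
                  · exact Real.exp_le_one_iff.mpr (by linarith [hr.1])
              _ = r ^ (s - 1) := one_mul _
              _ ≤ (max x 1) ^ (s - 1) := by
                  gcongr
                  · exact hr.1.le
                  · exact le_max_of_le_left hr.2
      _ = x * (max x 1) ^ (s - 1) := by
          rw [setIntegral_const, Real.volume_real_Ioc_of_le (by linarith), smul_eq_mul]
          ring_nf

lemma gamma_lb {K t : ℝ} (hK : 1 ≤ K) (ht : 1 ≤ t) :
    Real.exp (-(2 * K)) * K ^ t ≤ Real.Gamma t := by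
  have hK0 : (0:ℝ) < K := by linarith
  have hts : (0:ℝ) < t := by linarith
  have hi := Real.GammaIntegral_convergent hts
  have hsub : Set.Ioc K (2 * K) ⊆ Set.Ioi (0:ℝ) := fun r hr => lt_of_lt_of_le hK0 hr.1.le
  calc Real.exp (-(2 * K)) * K ^ t
      = K * (Real.exp (-(2 * K)) * K ^ (t - 1)) := by
        have hKt : K ^ t = K ^ (t - 1) * K ^ (1:ℝ) := by
          rw [← Real.rpow_add hK0]; ring_nf
        rw [hKt, Real.rpow_one]; ring
    _ = ∫ _ in Set.Ioc K (2 * K), Real.exp (-(2 * K)) * K ^ (t - 1) := by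
        rw [setIntegral_const, Real.volume_real_Ioc_of_le (by linarith), smul_eq_mul]
        ring_nf
    _ ≤ ∫ r in Set.Ioc K (2 * K), Real.exp (-r) * r ^ (t - 1) := by
        refine setIntegral_mono_on ((integrableOn_const_iff).mpr (Or.inr ?_))
          (hi.mono_set hsub) measurableSet_Ioc fun r hr => ?_
        · rw [Real.volume_Ioc]; exact ENNReal.ofReal_lt_top
        · exact mul_le_mul (Real.exp_le_exp.mpr (by linarith [hr.2]))
            (Real.rpow_le_rpow hK0.le hr.1.le (by linarith)) (by positivity)
            (Real.exp_pos _).le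
    _ ≤ ∫ r in Set.Ioi 0, Real.exp (-r) * r ^ (t - 1) := by
        refine setIntegral_mono_set hi ?_ (HasSubset.Subset.eventuallyLE hsub)
        filter_upwards [ae_restrict_mem measurableSet_Ioi] with r hr
        have : (0:ℝ) < r := hr
        positivity
    _ = Real.Gamma t := (Real.Gamma_eq_integral hts).symm
theorem stmt_6 (x a : ℝ) (hx : 0 < x) :
    Tendsto (fun t : ℝ => upperIncGamma (t + a) x / (Real.Gamma t * t ^ a))
      atTop (nhds 1) := by
  set M : ℝ := max x 1 with hM
  have hM1 : (1:ℝ) ≤ M := le_max_right _ _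
  have hM0 : (0:ℝ) < M := by linarith
  set K : ℝ := 2 * M with hK
  have hK1 : (1:ℝ) ≤ K := by simp only [hK]; linarith
  have hK0 : (0:ℝ) < K := by linarith
  set C : ℝ := x * M ^ (a - 1) * Real.exp (2 * K) with hC
  -- the lower-part term tends to 0
  have hterm2 : Tendsto (fun t : ℝ =>
      (∫ r in Set.Ioc 0 x, Real.exp (-r) * r ^ (t + a - 1)) / (Real.Gamma t * t ^ a))
      atTop (𝓝 0) := by
    have hg : Tendsto (fun t : ℝ => C * (t ^ (-a) * Real.exp (-(Real.log 2) * t)))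
        atTop (𝓝 (C * 0)) :=
      (tendsto_rpow_mul_exp_neg_mul_atTop_nhds_zero (-a) (Real.log 2)
        (Real.log_pos one_lt_two)).const_mul C
    rw [mul_zero] at hg
    refine squeeze_zero' ?_ ?_ hg
    · filter_upwards [eventually_ge_atTop (max 1 (1 - a))] with t ht
      have ht1 : 1 ≤ t := le_trans (le_max_left _ _) ht
      have ht0 : 0 < t := by linarith
      have hta : 1 ≤ t + a := by have := le_trans (le_max_right _ _) ht; linarith
      have hGt := Real.Gamma_pos_of_pos ht0
      have := (lowerPart_bounds hta hx).1
      positivity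
    · filter_upwards [eventually_ge_atTop (max 1 (1 - a))] with t ht
      have ht1 : 1 ≤ t := le_trans (le_max_left _ _) ht
      have ht0 : 0 < t := by linarith
      have hta : 1 ≤ t + a := by have := le_trans (le_max_right _ _) ht; linarith
      have hb := lowerPart_bounds hta hx
      have hGl := gamma_lb hK1 ht1
      have hKt : (0:ℝ) < Real.exp (-(2*K)) * K ^ t := by positivity
      have htapos : (0:ℝ) < t ^ a := Real.rpow_pos_of_pos ht0 a
      have step1 : (∫ r in Set.Ioc 0 x, Real.exp (-r) * r ^ (t + a - 1)) /
          (Real.Gamma t * t ^ a) ≤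
          (x * M ^ (t + a - 1)) / (Real.exp (-(2*K)) * K ^ t * t ^ a) := by
        refine div_le_div₀ (by positivity) hb.2 (by positivity) ?_
        exact mul_le_mul_of_nonneg_right hGl htapos.le
      refine step1.trans (le_of_eq ?_)
      have e1 : M ^ (t + a - 1) = M ^ t * M ^ (a - 1) := by
        rw [← Real.rpow_add hM0]; ring_nf
      have e2 : K ^ t = M ^ t * Real.exp (Real.log 2 * t) := by
        rw [hK, mul_comm (2:ℝ) M, Real.mul_rpow hM0.le (by norm_num : (0:ℝ) ≤ 2),
          Real.rpow_def_of_pos (by norm_num : (0:ℝ) < 2)]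
      have e3 : t ^ (-a) = (t ^ a)⁻¹ := Real.rpow_neg ht0.le a
      have e4 : Real.exp (-(Real.log 2) * t) = (Real.exp (Real.log 2 * t))⁻¹ := by
        rw [← Real.exp_neg]; ring_nf
      have hMt : (0:ℝ) < M ^ t := Real.rpow_pos_of_pos hM0 t
      rw [e1, e2, e3, e4, Real.exp_neg, hC]
      field_simp
  have hmain := (gammaRatio_all a).sub hterm2
  rw [sub_zero] at hmain
  refine hmain.congr' ?_
  filter_upwards [eventually_gt_atTop (max 0 (-a))] with t ht
  have ht0 : 0 < t := lt_of_le_of_lt (le_max_left _ _) ht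
  have hta : 0 < t + a := by have := lt_of_le_of_lt (le_max_right _ _) ht; linarith
  rw [gammaRatio, upperIncGamma_eq hta hx, sub_div, show t + a - 1 = t + a - 1 from rfl]
end

section
/- Let $d\ge 1$, $\alpha\in(1,\infty)$, let $g$ be a nonnegative symmetric function, and set $\kappa(r,s,t)=\mathbf{1}\{r<g(s,t)^{1/d}\} + (g(s,t)/r^d)^\alpha\mathbf{1}\{r\ge g(s,t)^{1/d}\}$. Define $\mathcal{S}_w(w_1,w_2) = \iint_{(\mathbb{R}^d)^2} \kappa(\|\mathbf{x}\|,w,w_1)\kappa(\|\mathbf{y}\|,w,w_2)\kappa(\|\mathbf{x}-\mathbf{y}\|,w_1,w_2)\, d\mathbf{x}\,d\mathbf{y}$. Then $\mathcal{S}_w(w_1,w_2) \le \left(\frac{\alpha\omega_d}{\alpha-1}\right)^2 \big[g(w,w_1)\wedge g(w,w_2)\big]\, g(w_1,w_2)$. -/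
open MeasureTheory Real

/-- The connection function `κ_α` with weight function `g`. -/
noncomputable def kappa (d : ℕ) (α : ℝ) (g : ℝ → ℝ → ℝ) (r s t : ℝ) : ℝ :=
  if r < (g s t) ^ ((1 : ℝ) / d) then 1 else (g s t / r ^ (d : ℝ)) ^ α

/-- The triangle integral `S_w(w₁,w₂)`. -/
noncomputable def triangleInt (d : ℕ) (α : ℝ) (g : ℝ → ℝ → ℝ) (w w₁ w₂ : ℝ) : ℝ :=
  ∫ x : EuclideanSpace ℝ (Fin d), ∫ y : EuclideanSpace ℝ (Fin d),
    kappa d α g ‖x‖ w w₁ * kappa d α g ‖y‖ w w₂ * kappa d α g ‖x - y‖ w₁ w₂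

open Set

lemma kappa_meas {d : ℕ} {α : ℝ} {g : ℝ → ℝ → ℝ} {s t : ℝ} :
    Measurable fun r => kappa d α g r s t := by
  unfold kappa
  exact Measurable.ite (measurableSet_lt measurable_id measurable_const) measurable_const
    (((measurable_const.div (measurable_id.pow measurable_const)).pow measurable_const))

lemma kappa_nn {d : ℕ} {α : ℝ} {g : ℝ → ℝ → ℝ} {s t : ℝ}
    (hg : 0 ≤ g s t) {r : ℝ} (hr : 0 ≤ r) : 0 ≤ kappa d α g r s t := by
  unfold kappa
  split
  · exact zero_le_one
  · exact rpow_nonneg (div_nonneg hg (rpow_nonneg hr _)) _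

lemma kappa_le_one {d : ℕ} (hd : 1 ≤ d) {α : ℝ} (hα : 0 < α) {g : ℝ → ℝ → ℝ} {s t : ℝ}
    (hg : 0 ≤ g s t) {r : ℝ} (hr : 0 ≤ r) : kappa d α g r s t ≤ 1 := by
  have hd0 : ((d : ℝ)) ≠ 0 := by positivity
  unfold kappa
  split
  · exact le_refl 1
  · rename_i h
    push_neg at h
    rcases eq_or_lt_of_le hr with h0 | h0
    · have hR0 : g s t ^ ((1:ℝ)/d) = 0 := le_antisymm (h0 ▸ h) (rpow_nonneg hg _)
      have hg0 : g s t = 0 := by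
        have := (Real.rpow_eq_zero_iff_of_nonneg hg).1 hR0
        exact this.1
      rw [hg0, zero_div, Real.zero_rpow hα.ne']
      exact zero_le_one
    · apply Real.rpow_le_one (div_nonneg hg (rpow_nonneg hr _)) _ hα.le
      rw [div_le_one (rpow_pos_of_pos h0 _)]
      calc g s t = (g s t ^ ((1:ℝ)/d)) ^ (d:ℝ) := by
            rw [← Real.rpow_mul hg, one_div, inv_mul_cancel₀ hd0, Real.rpow_one]
        _ ≤ r ^ (d:ℝ) := Real.rpow_le_rpow (rpow_nonneg hg _) h (Nat.cast_nonneg d)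

lemma kappa_le_bound {d : ℕ} (hd : 1 ≤ d) {α : ℝ} (hα : 1 < α) {g : ℝ → ℝ → ℝ} {s t : ℝ}
    (hg : 0 ≤ g s t) {r : ℝ} (hr : 0 ≤ r) :
    kappa d α g r s t ≤
      (1 + g s t ^ ((1:ℝ)/d)) ^ ((d:ℝ)*α) * (1 + r) ^ (-((d:ℝ)*α)) := by
  have hd0 : ((d : ℝ)) ≠ 0 := by positivity
  set R := g s t ^ ((1:ℝ)/d) with hRdef
  have hR : 0 ≤ R := rpow_nonneg hg _
  have hp : (0:ℝ) ≤ (d:ℝ)*α := by positivity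
  have h1r : (0:ℝ) < 1 + r := by linarith
  have h1R : (0:ℝ) < 1 + R := by linarith
  have hRHS : (1 + R) ^ ((d:ℝ)*α) * (1 + r) ^ (-((d:ℝ)*α))
      = ((1 + R)/(1 + r)) ^ ((d:ℝ)*α) := by
    rw [Real.rpow_neg h1r.le, Real.div_rpow h1R.le h1r.le, div_eq_mul_inv]
  rw [hRHS]
  have hcR : g s t = R ^ (d:ℝ) := by
    rw [hRdef, ← Real.rpow_mul hg, one_div, inv_mul_cancel₀ hd0, Real.rpow_one]
  unfold kappa
  split
  · rename_i h
    apply Real.one_le_rpow _ hp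
    rw [le_div_iff₀ h1r]
    linarith
  · rename_i h
    push_neg at h
    rcases eq_or_lt_of_le hr with h0 | h0
    · have hR0 : R = 0 := le_antisymm (h0 ▸ h) hR
      have hg0 : g s t = 0 := by rw [hcR, hR0, Real.zero_rpow hd0]
      rw [hg0, zero_div, Real.zero_rpow (by positivity : α ≠ 0)]
      positivity
    · have hbase : g s t / r ^ (d:ℝ) = (R / r) ^ (d:ℝ) := by
        rw [hcR, Real.div_rpow hR hr]
      rw [hbase, ← Real.rpow_mul (div_nonneg hR h0.le)]
      apply Real.rpow_le_rpow (div_nonneg hR h0.le) _ hp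
      rw [div_le_div_iff₀ h0 h1r]
      nlinarith

lemma kappa_integrable {d : ℕ} (hd : 1 ≤ d) {α : ℝ} (hα : 1 < α) {g : ℝ → ℝ → ℝ} {s t : ℝ}
    (hg : 0 ≤ g s t) :
    Integrable (fun x : EuclideanSpace ℝ (Fin d) => kappa d α g ‖x‖ s t) := by
  have hd1 : (1:ℝ) ≤ d := by exact_mod_cast hd
  have hdim : ((Module.finrank ℝ (EuclideanSpace ℝ (Fin d))) : ℝ) < (d:ℝ)*α := by
    rw [finrank_euclideanSpace_fin]
    nlinarith
  have hbase : Integrable (fun x : EuclideanSpace ℝ (Fin d) => (1 + ‖x‖) ^ (-((d:ℝ)*α))) :=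
    integrable_one_add_norm hdim
  refine ((hbase.const_mul ((1 + g s t ^ ((1:ℝ)/d)) ^ ((d:ℝ)*α))).mono' ?_ ?_)
  · exact (kappa_meas.comp measurable_norm).aestronglyMeasurable
  · filter_upwards with x
    rw [Real.norm_of_nonneg (kappa_nn hg (norm_nonneg x))]
    exact kappa_le_bound hd hα hg (norm_nonneg x)

lemma integral_kappa {d : ℕ} (hd : 1 ≤ d) {α : ℝ} (hα : 1 < α) {g : ℝ → ℝ → ℝ} {s t : ℝ}
    (hg : 0 ≤ g s t) :
    ∫ x : EuclideanSpace ℝ (Fin d), kappa d α g ‖x‖ s t =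
      α * (volume (Metric.ball (0 : EuclideanSpace ℝ (Fin d)) 1)).toReal / (α - 1) * g s t := by
  have hd0 : ((d:ℝ)) ≠ 0 := by positivity
  have hd1 : (1:ℝ) ≤ d := by exact_mod_cast hd
  have hα1 : (0:ℝ) < α - 1 := by linarith
  haveI : Nontrivial (EuclideanSpace ℝ (Fin d)) :=
    Module.nontrivial_of_finrank_pos (R := ℝ) (by rw [finrank_euclideanSpace_fin]; omega)
  rw [MeasureTheory.integral_fun_norm_addHaar volume (fun r => kappa d α g r s t)]
  rw [finrank_euclideanSpace_fin]
  set ω := (volume (Metric.ball (0 : EuclideanSpace ℝ (Fin d)) 1)).toReal with hω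
  set c := g s t with hc
  set R := c ^ ((1:ℝ)/d) with hR
  have hcR : R ^ (d:ℝ) = c := by
    rw [hR, ← Real.rpow_mul hg, one_div, inv_mul_cancel₀ hd0, Real.rpow_one]
  have key : ∫ y in Ioi (0:ℝ), y ^ (d - 1) • kappa d α g y s t = α * c / ((α - 1) * d) := by
    rcases eq_or_lt_of_le hg with hc0 | hc0
    · have hzero : ∀ y ∈ Ioi (0:ℝ), y ^ (d - 1) • kappa d α g y s t = 0 := by
        intro y hy
        have hy0 : (0:ℝ) < y := hy
        unfold kappa
        rw [← hc, ← hc0, Real.zero_rpow (by positivity : (1:ℝ)/d ≠ 0),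
          if_neg (by push_neg; exact hy0.le), zero_div,
          Real.zero_rpow (by positivity : α ≠ 0), smul_zero]
      rw [setIntegral_congr_fun measurableSet_Ioi hzero, integral_zero, ← hc0]
      ring
    · have hRpos : 0 < R := Real.rpow_pos_of_pos hc0 _
      have hsplit : Ioi (0:ℝ) = Ioc 0 R ∪ Ioi R := (Ioc_union_Ioi_eq_Ioi hRpos.le).symm
      have hdisj : Disjoint (Ioc (0:ℝ) R) (Ioi R) := Ioc_disjoint_Ioi le_rfl
      have hae1 : ∀ᵐ y ∂(volume.restrict (Ioc (0:ℝ) R)),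
          y ^ (d - 1) • kappa d α g y s t = y ^ (d - 1) := by
        have hne : ∀ᵐ y : ℝ, y ≠ R := by
          refine ae_iff.2 ?_
          simp
        filter_upwards [ae_restrict_mem measurableSet_Ioc, ae_restrict_of_ae hne] with y hy hyne
        have hyR : y < R := lt_of_le_of_ne hy.2 hyne
        unfold kappa
        rw [← hc, ← hR, if_pos hyR, smul_eq_mul, mul_one]
      have hI1int : IntegrableOn (fun y : ℝ => y ^ (d - 1)) (Ioc (0:ℝ) R) := by
        rw [← intervalIntegrable_iff_integrableOn_Ioc_of_le hRpos.le]
        exact intervalIntegral.intervalIntegrable_pow _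
      have hI1 : ∫ y in Ioc (0:ℝ) R, y ^ (d - 1) • kappa d α g y s t = c / d := by
        rw [integral_congr_ae hae1, ← intervalIntegral.integral_of_le hRpos.le,
          integral_pow, Nat.sub_add_cancel hd]
        rw [show R ^ d = c by rw [← Real.rpow_natCast R d, hcR], zero_pow (by omega), sub_zero]
        rw [Nat.cast_sub hd, Nat.cast_one]
        norm_num
      have he : (d:ℝ) - 1 - d*α < -1 := by nlinarith
      have heq2 : ∀ y ∈ Ioi R, y ^ (d - 1) • kappa d α g y s t
          = c ^ α * y ^ ((d:ℝ) - 1 - d*α) := by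
        intro y hy
        have hyR : R < y := hy
        have hy0 : (0:ℝ) < y := hRpos.trans hyR
        unfold kappa
        rw [← hc, ← hR, if_neg (by push_neg; exact hyR.le), smul_eq_mul]
        rw [Real.div_rpow hg (rpow_nonneg hy0.le _), ← Real.rpow_natCast y (d-1),
          ← Real.rpow_mul hy0.le, Nat.cast_sub hd, Nat.cast_one]
        conv_rhs => rw [show (d:ℝ) - 1 - d*α = ((d:ℝ) - 1) - (d:ℝ)*α from rfl,
          Real.rpow_sub hy0]
        ring
      have hI2int : IntegrableOn (fun y : ℝ => y ^ (d - 1) • kappa d α g y s t) (Ioi R) := by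
        exact MeasureTheory.IntegrableOn.congr_fun
          ((integrableOn_Ioi_rpow_of_lt he hRpos).const_mul (c ^ α))
          (fun y hy => (heq2 y hy).symm) measurableSet_Ioi
      have hI2 : ∫ y in Ioi R, y ^ (d - 1) • kappa d α g y s t = c / (d * (α - 1)) := by
        rw [setIntegral_congr_fun measurableSet_Ioi heq2, integral_const_mul,
          integral_Ioi_rpow_of_lt he hRpos]
        have h1 : (d:ℝ) - 1 - d*α + 1 = d - d*α := by ring
        rw [h1]
        have h2 : R ^ ((d:ℝ) - d*α) = c ^ (1 - α) := by
          rw [hR, ← Real.rpow_mul hg]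
          congr 1
          field_simp
        have hD : (d:ℝ) - d*α ≠ 0 := by nlinarith
        have hD2 : (d:ℝ)*(α-1) ≠ 0 := by positivity
        have h3 : c ^ α * c ^ (1 - α) = c := by
          rw [← Real.rpow_add hc0]; norm_num
        have h4 : -c ^ ((1:ℝ)-α) / ((d:ℝ) - d*α) = c^((1:ℝ)-α) / ((d:ℝ)*(α-1)) := by
          rw [div_eq_div_iff hD hD2]; ring
        rw [h2, h4, ← mul_div_assoc, h3]
      rw [hsplit, setIntegral_union hdisj measurableSet_Ioi
        (hI1int.congr (Filter.EventuallyEq.symm hae1)) hI2int, hI1, hI2]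
      field_simp
      ring
  rw [key, nsmul_eq_mul, smul_eq_mul, measureReal_def, ← hω]
  field_simp

lemma lintegral_kappa {d : ℕ} (hd : 1 ≤ d) {α : ℝ} (hα : 1 < α) {g : ℝ → ℝ → ℝ} {s t : ℝ}
    (hg : 0 ≤ g s t) :
    ∫⁻ x : EuclideanSpace ℝ (Fin d), ENNReal.ofReal (kappa d α g ‖x‖ s t) =
      ENNReal.ofReal
        (α * (volume (Metric.ball (0 : EuclideanSpace ℝ (Fin d)) 1)).toReal / (α - 1) * g s t)
    := by
  rw [← ofReal_integral_eq_lintegral_ofReal (kappa_integrable hd hα hg)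
    (Filter.Eventually.of_forall fun x => kappa_nn hg (norm_nonneg x))]
  rw [integral_kappa hd hα hg]

theorem stmt_9 (d : ℕ) (hd : 1 ≤ d) (α : ℝ) (hα : 1 < α)
    (g : ℝ → ℝ → ℝ) (hgnn : ∀ s t, 0 ≤ g s t) (hgsym : ∀ s t, g s t = g t s)
    (w w₁ w₂ : ℝ) :
    triangleInt d α g w w₁ w₂ ≤
      (α * (volume (Metric.ball (0 : EuclideanSpace ℝ (Fin d)) 1)).toReal / (α - 1)) ^ 2
        * min (g w w₁) (g w w₂) * g w₁ w₂ := by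
  have hα0 : (0:ℝ) < α := by linarith
  set ω := (volume (Metric.ball (0 : EuclideanSpace ℝ (Fin d)) 1)).toReal with hω
  have hω0 : 0 ≤ ω := ENNReal.toReal_nonneg
  set C := α * ω / (α - 1) with hC
  have hC0 : 0 ≤ C := by
    rw [hC]
    exact div_nonneg (mul_nonneg hα0.le hω0) (by linarith)
  have h1 : ∀ x : EuclideanSpace ℝ (Fin d), 0 ≤ kappa d α g ‖x‖ w w₁ :=
    fun x => kappa_nn (hgnn w w₁) (norm_nonneg x)
  have h2 : ∀ y : EuclideanSpace ℝ (Fin d), 0 ≤ kappa d α g ‖y‖ w w₂ :=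
    fun y => kappa_nn (hgnn w w₂) (norm_nonneg y)
  have h3 : ∀ z : EuclideanSpace ℝ (Fin d), 0 ≤ kappa d α g ‖z‖ w₁ w₂ :=
    fun z => kappa_nn (hgnn w₁ w₂) (norm_nonneg z)
  have hmin0 : 0 ≤ min (g w w₁) (g w w₂) := le_min (hgnn w w₁) (hgnn w w₂)
  set F : EuclideanSpace ℝ (Fin d) → EuclideanSpace ℝ (Fin d) → ℝ :=
    fun x y => kappa d α g ‖x‖ w w₁ * kappa d α g ‖y‖ w w₂ * kappa d α g ‖x - y‖ w₁ w₂ with hF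
  have hFnn : ∀ x y, 0 ≤ F x y := fun x y =>
    mul_nonneg (mul_nonneg (h1 x) (h2 y)) (kappa_nn (hgnn w₁ w₂) (norm_nonneg _))
  have hFm : Measurable (Function.uncurry fun x y => ENNReal.ofReal (F x y)) := by
    apply Measurable.ennreal_ofReal
    exact ((kappa_meas.comp (measurable_norm.comp measurable_fst)).mul
      (kappa_meas.comp (measurable_norm.comp measurable_snd))).mul
      (kappa_meas.comp ((measurable_fst.sub measurable_snd).norm))
  set H : EuclideanSpace ℝ (Fin d) → ENNReal := fun x => ∫⁻ y, ENNReal.ofReal (F x y) with hH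
  have hHm : Measurable H := Measurable.lintegral_prod_right hFm
  set J₃ : ENNReal := ∫⁻ z : EuclideanSpace ℝ (Fin d),
    ENNReal.ofReal (kappa d α g ‖z‖ w₁ w₂) with hJ3
  have hJ3v : J₃ = ENNReal.ofReal (C * g w₁ w₂) := by
    rw [hJ3, lintegral_kappa hd hα (hgnn w₁ w₂), hC]
  have hJ3ne : J₃ ≠ ⊤ := by rw [hJ3v]; exact ENNReal.ofReal_ne_top
  have hFxm : ∀ x, Measurable fun y : EuclideanSpace ℝ (Fin d) => F x y := fun x => by
    rw [hF]
    exact (((kappa_meas.comp measurable_norm).const_mul _).mul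
      (kappa_meas.comp ((measurable_const.sub measurable_id).norm)))
  -- step 1
  have step1 : triangleInt d α g w w₁ w₂ = ∫ x, (H x).toReal := by
    unfold triangleInt
    refine integral_congr_ae (Filter.Eventually.of_forall fun x => ?_)
    rw [hH]
    exact integral_eq_lintegral_of_nonneg_ae
      (Filter.Eventually.of_forall fun y => hFnn x y) (hFxm x).aestronglyMeasurable
  have step2 : ∫ x, (H x).toReal = (∫⁻ x, ENNReal.ofReal ((H x).toReal)).toReal := by
    exact integral_eq_lintegral_of_nonneg_ae
      (Filter.Eventually.of_forall fun x => ENNReal.toReal_nonneg)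
      hHm.ennreal_toReal.aestronglyMeasurable
  -- key bound
  have hsub : ∀ y : EuclideanSpace ℝ (Fin d),
      (∫⁻ x, ENNReal.ofReal (kappa d α g ‖x - y‖ w₁ w₂)) = J₃ := fun y =>
    lintegral_sub_right_eq_self (fun z => ENNReal.ofReal (kappa d α g ‖z‖ w₁ w₂)) y
  have hsub' : ∀ x : EuclideanSpace ℝ (Fin d),
      (∫⁻ y, ENNReal.ofReal (kappa d α g ‖x - y‖ w₁ w₂)) = J₃ := fun x => by
    have hrev : (∫⁻ y, ENNReal.ofReal (kappa d α g ‖x - y‖ w₁ w₂)) =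
        ∫⁻ y, ENNReal.ofReal (kappa d α g ‖y - x‖ w₁ w₂) :=
      lintegral_congr fun y => by rw [norm_sub_rev]
    rw [hrev]
    exact lintegral_sub_right_eq_self (fun z => ENNReal.ofReal (kappa d α g ‖z‖ w₁ w₂)) x
  have hsplit : ∀ x y, ENNReal.ofReal (F x y) =
      ENNReal.ofReal (kappa d α g ‖x‖ w w₁) *
        (ENNReal.ofReal (kappa d α g ‖y‖ w w₂) *
          ENNReal.ofReal (kappa d α g ‖x - y‖ w₁ w₂)) := by
    intro x y
    rw [hF]
    dsimp only
    rw [mul_assoc, ENNReal.ofReal_mul (h1 x), ENNReal.ofReal_mul (h2 y)]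
  have main : (∫⁻ x, H x) ≤
      ENNReal.ofReal (C * min (g w w₁) (g w w₂)) * ENNReal.ofReal (C * g w₁ w₂) := by
    rcases le_total (g w w₁) (g w w₂) with hmm | hmm
    · rw [min_eq_left hmm]
      have inner : ∀ x, H x ≤ ENNReal.ofReal (kappa d α g ‖x‖ w w₁) * J₃ := by
        intro x
        rw [hH]
        dsimp only
        calc (∫⁻ y, ENNReal.ofReal (F x y))
            = ∫⁻ y, ENNReal.ofReal (kappa d α g ‖x‖ w w₁) *
                (ENNReal.ofReal (kappa d α g ‖y‖ w w₂) *
                  ENNReal.ofReal (kappa d α g ‖x - y‖ w₁ w₂)) :=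
              lintegral_congr fun y => hsplit x y
          _ = ENNReal.ofReal (kappa d α g ‖x‖ w w₁) *
                ∫⁻ y, (ENNReal.ofReal (kappa d α g ‖y‖ w w₂) *
                  ENNReal.ofReal (kappa d α g ‖x - y‖ w₁ w₂)) :=
              lintegral_const_mul' _ _ ENNReal.ofReal_ne_top
          _ ≤ ENNReal.ofReal (kappa d α g ‖x‖ w w₁) * J₃ := by
              apply mul_le_mul_right
              rw [← hsub' x]
              apply lintegral_mono fun y => ?_
              calc ENNReal.ofReal (kappa d α g ‖y‖ w w₂) *
                    ENNReal.ofReal (kappa d α g ‖x - y‖ w₁ w₂)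
                  ≤ 1 * ENNReal.ofReal (kappa d α g ‖x - y‖ w₁ w₂) := by
                    apply mul_le_mul_left
                    rw [show (1 : ENNReal) = ENNReal.ofReal 1 by simp]
                    exact ENNReal.ofReal_le_ofReal
                      (kappa_le_one hd hα0 (hgnn w w₂) (norm_nonneg y))
                _ = ENNReal.ofReal (kappa d α g ‖x - y‖ w₁ w₂) := one_mul _
      calc (∫⁻ x, H x) ≤ ∫⁻ x, ENNReal.ofReal (kappa d α g ‖x‖ w w₁) * J₃ :=
            lintegral_mono inner
        _ = (∫⁻ x, ENNReal.ofReal (kappa d α g ‖x‖ w w₁)) * J₃ :=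
            lintegral_mul_const' _ _ hJ3ne
        _ = ENNReal.ofReal (C * g w w₁) * ENNReal.ofReal (C * g w₁ w₂) := by
            rw [lintegral_kappa hd hα (hgnn w w₁), hJ3v, hC]
    · rw [min_eq_right hmm]
      have inner : ∀ x, H x ≤ ∫⁻ y, ENNReal.ofReal (kappa d α g ‖y‖ w w₂) *
          ENNReal.ofReal (kappa d α g ‖x - y‖ w₁ w₂) := by
        intro x
        rw [hH]
        dsimp only
        apply lintegral_mono fun y => ?_
        rw [hsplit x y]
        calc ENNReal.ofReal (kappa d α g ‖x‖ w w₁) *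
              (ENNReal.ofReal (kappa d α g ‖y‖ w w₂) *
                ENNReal.ofReal (kappa d α g ‖x - y‖ w₁ w₂))
            ≤ 1 * (ENNReal.ofReal (kappa d α g ‖y‖ w w₂) *
                ENNReal.ofReal (kappa d α g ‖x - y‖ w₁ w₂)) := by
              apply mul_le_mul_left
              rw [show (1 : ENNReal) = ENNReal.ofReal 1 by simp]
              exact ENNReal.ofReal_le_ofReal
                (kappa_le_one hd hα0 (hgnn w w₁) (norm_nonneg x))
          _ = _ := one_mul _
      have hswapm : AEMeasurable (Function.uncurry fun x y : EuclideanSpace ℝ (Fin d) =>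
          ENNReal.ofReal (kappa d α g ‖y‖ w w₂) *
            ENNReal.ofReal (kappa d α g ‖x - y‖ w₁ w₂))
          ((volume : Measure (EuclideanSpace ℝ (Fin d))).prod volume) := by
        apply Measurable.aemeasurable
        exact ((kappa_meas.comp (measurable_norm.comp measurable_snd)).ennreal_ofReal).mul
          ((kappa_meas.comp ((measurable_fst.sub measurable_snd).norm)).ennreal_ofReal)
      calc (∫⁻ x, H x) ≤ ∫⁻ x, ∫⁻ y, ENNReal.ofReal (kappa d α g ‖y‖ w w₂) *
            ENNReal.ofReal (kappa d α g ‖x - y‖ w₁ w₂) := lintegral_mono inner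
        _ = ∫⁻ y, ∫⁻ x, ENNReal.ofReal (kappa d α g ‖y‖ w w₂) *
            ENNReal.ofReal (kappa d α g ‖x - y‖ w₁ w₂) := lintegral_lintegral_swap hswapm
        _ = ∫⁻ y, ENNReal.ofReal (kappa d α g ‖y‖ w w₂) * J₃ := by
            refine lintegral_congr fun y => ?_
            rw [lintegral_const_mul' _ _ ENNReal.ofReal_ne_top, hsub y]
        _ = (∫⁻ y, ENNReal.ofReal (kappa d α g ‖y‖ w w₂)) * J₃ :=
            lintegral_mul_const' _ _ hJ3ne
        _ = ENNReal.ofReal (C * g w w₂) * ENNReal.ofReal (C * g w₁ w₂) := by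
            rw [lintegral_kappa hd hα (hgnn w w₂), hJ3v, hC]
  -- conclude
  have fin : (∫⁻ x, ENNReal.ofReal ((H x).toReal)) ≤
      ENNReal.ofReal (C * min (g w w₁) (g w w₂) * (C * g w₁ w₂)) := by
    calc (∫⁻ x, ENNReal.ofReal ((H x).toReal)) ≤ ∫⁻ x, H x :=
          lintegral_mono fun x => ENNReal.ofReal_toReal_le
      _ ≤ ENNReal.ofReal (C * min (g w w₁) (g w w₂)) * ENNReal.ofReal (C * g w₁ w₂) := main
      _ = ENNReal.ofReal (C * min (g w w₁) (g w w₂) * (C * g w₁ w₂)) :=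
          (ENNReal.ofReal_mul (mul_nonneg hC0 hmin0)).symm
  rw [step1, step2]
  calc (∫⁻ x, ENNReal.ofReal ((H x).toReal)).toReal
      ≤ (ENNReal.ofReal (C * min (g w w₁) (g w w₂) * (C * g w₁ w₂))).toReal :=
        ENNReal.toReal_mono ENNReal.ofReal_ne_top fin
    _ = C * min (g w w₁) (g w w₂) * (C * g w₁ w₂) :=
        ENNReal.toReal_ofReal (mul_nonneg (mul_nonneg hC0 hmin0) (mul_nonneg hC0 (hgnn w₁ w₂)))
    _ = C ^ 2 * min (g w w₁) (g w w₂) * g w₁ w₂ := by ring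
end
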